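/- Let M be a von Neumann algebra on a complex Hilbert space H, let J be a conjugation of H, let γ₀ ∈ H with J γ₀ = γ₀, and let P ⊆ H be a set such that: γ₀ ∈ P; for all ξ, η ∈ P the real part of ⟪ξ, η⟫ is nonnegative; and for every b ∈ M and ξ ∈ P one has b(J(b(J ξ))) ∈ P (the cone axiom b·j(b)·P ⊆ P). Let p₀ be the orthogonal projection of H onto the closure of {x' γ₀ : x' ∈ M'}. If x, y ∈ M satisfy star x = −x, star y = −y, x ∘ p₀ = x, y ∘ p₀ = y, and x γ₀ + J(y γ₀) = 0, then x = y. (This is the key injectivity step in the proof of Theorem 6.10, showing Ker TΨ_{γ₀} = Ker TΨ.) -/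

import Mathlib

/-- Key injectivity step in the proof of Theorem 6.10 (Ker TΨ_{γ₀} = Ker TΨ):
if x, y ∈ M are skew-adjoint, supported on p₀ = [M'γ₀], and
x γ₀ + J(y γ₀) = 0, then x = y. -/
theorem stmt15 {H : Type*} [NormedAddCommGroup H] [InnerProductSpace ℂ H]
    [CompleteSpace H]
    (M : VonNeumannAlgebra H) (γ₀ : H) (J : H → H)
    (hJadd : ∀ ξ η : H, J (ξ + η) = J ξ + J η)
    (hJsmul : ∀ (c : ℂ) (ξ : H), J (c • ξ) = (starRingEnd ℂ c) • J ξ)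
    (hJnorm : ∀ ξ : H, ‖J ξ‖ = ‖ξ‖)
    (hJinv : ∀ ξ : H, J (J ξ) = ξ)
    (hJγ₀ : J γ₀ = γ₀)
    (P : Set H) (hγ₀P : γ₀ ∈ P)
    (hPpos : ∀ ξ ∈ P, ∀ η ∈ P, 0 ≤ (inner ℂ ξ η : ℂ).re)
    (hcone : ∀ b : H →L[ℂ] H, b ∈ M → ∀ ξ ∈ P, b (J (b (J ξ))) ∈ P)
    (K : Submodule ℂ H)
    (hK : K = (Submodule.span ℂ
      {w : H | ∃ x' : H →L[ℂ] H, x' ∈ M.commutant ∧ w = x' γ₀}).topologicalClosure)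
    (p₀ : H →L[ℂ] H)
    (hp₀ : ∀ ξ : H, p₀ ξ ∈ K ∧ ξ - p₀ ξ ∈ Kᗮ)
    (x y : H →L[ℂ] H) (hx : x ∈ M) (hy : y ∈ M)
    (hxs : star x = -x) (hys : star y = -y)
    (hxp : x ∘L p₀ = x) (hyp : y ∘L p₀ = y)
    (hxy : x γ₀ + J (y γ₀) = 0) :
    x = y := by
  set z : H →L[ℂ] H := x - y with hzdef
  have hzM : z ∈ M := sub_mem hx hy
  have hzs : star z = -z := by
    rw [hzdef, star_sub, hxs, hys]; abel
  have hJ0 : J 0 = 0 := by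
    have h := hJadd 0 0
    simp only [add_zero] at h
    nth_rewrite 1 [← add_zero (J 0)] at h
    exact (add_left_cancel h).symm
  -- J-fixedness of z γ₀
  have hJy : J (y γ₀) = -(x γ₀) := eq_neg_of_add_eq_zero_right hxy
  have hJx : J (x γ₀) = -(y γ₀) := by
    have h := congrArg J hxy
    rw [hJadd, hJinv, hJ0] at h
    exact eq_neg_of_add_eq_zero_left h
  have hJz : J (z γ₀) = z γ₀ := by
    have h1 : z γ₀ = x γ₀ + (-1 : ℂ) • (y γ₀) := by
      simp [hzdef, ContinuousLinearMap.sub_apply, sub_eq_add_neg]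
    rw [h1, hJadd, hJsmul, hJx, hJy]
    simp
    abel
  -- skew-adjointness in inner products
  have hskew : ∀ a b : H, (inner ℂ (z a) b : ℂ) = -(inner ℂ a (z b) : ℂ) := by
    intro a b
    rw [← ContinuousLinearMap.adjoint_inner_right z a b, ← ContinuousLinearMap.star_eq_adjoint,
      hzs]
    simp
  have hre1 : (inner ℂ (z γ₀) γ₀ : ℂ).re = 0 := by
    have h := hskew γ₀ γ₀
    have h2 : (inner ℂ γ₀ (z γ₀) : ℂ) = (starRingEnd ℂ) (inner ℂ (z γ₀) γ₀ : ℂ) :=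
      (inner_conj_symm _ _).symm
    rw [h2] at h
    have := congrArg Complex.re h
    simp at this
    have h3 : (inner ℂ γ₀ (z γ₀) : ℂ).re = (inner ℂ (z γ₀) γ₀ : ℂ).re := by
      rw [h2, Complex.conj_re]
    linarith
  have hre2 : (inner ℂ (z (z γ₀)) γ₀ : ℂ) = -(inner ℂ (z γ₀) (z γ₀) : ℂ) := hskew (z γ₀) γ₀
  -- cone elements ζ(t) = γ₀ + 2t z γ₀ + t² z (z γ₀)
  have hζ : ∀ t : ℝ, γ₀ + ((2 * t : ℝ) : ℂ) • z γ₀ + ((t : ℂ) ^ 2) • z (z γ₀) ∈ P := by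
    intro t
    have hbM : (1 : H →L[ℂ] H) + (t : ℂ) • z ∈ M :=
      add_mem (one_mem M) (M.toStarSubalgebra.smul_mem hzM _)
    have h := hcone _ hbM γ₀ hγ₀P
    have e1 : ((1 : H →L[ℂ] H) + (t : ℂ) • z) (J γ₀) = γ₀ + (t : ℂ) • z γ₀ := by
      simp [hJγ₀]
    have e2 : J (γ₀ + (t : ℂ) • z γ₀) = γ₀ + (t : ℂ) • z γ₀ := by
      rw [hJadd, hJγ₀, hJsmul, hJz, Complex.conj_ofReal]
    have e3 : ((1 : H →L[ℂ] H) + (t : ℂ) • z) (γ₀ + (t : ℂ) • z γ₀)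
        = γ₀ + ((2 * t : ℝ) : ℂ) • z γ₀ + ((t : ℂ) ^ 2) • z (z γ₀) := by
      have hc : ((2 * t : ℝ) : ℂ) = 2 * (t : ℂ) := by push_cast; ring
      rw [hc]
      simp only [ContinuousLinearMap.add_apply, ContinuousLinearMap.one_apply,
        ContinuousLinearMap.smul_apply, map_add, map_smul]
      module
    rw [e1, e2, e3] at h
    exact h
  -- positivity gives ‖γ₀‖² - t² ‖z γ₀‖² ≥ 0
  have hkey : ∀ t : ℝ, 0 ≤ ‖γ₀‖ ^ 2 - t ^ 2 * ‖z γ₀‖ ^ 2 := by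
    intro t
    have h := hPpos _ (hζ t) γ₀ hγ₀P
    have hexp : (inner ℂ (γ₀ + ((2 * t : ℝ) : ℂ) • z γ₀ + ((t : ℂ) ^ 2) • z (z γ₀)) γ₀ : ℂ).re
        = ‖γ₀‖ ^ 2 - t ^ 2 * ‖z γ₀‖ ^ 2 := by
      rw [inner_add_left, inner_add_left, inner_smul_left, inner_smul_left, hre2]
      have hγn : (inner ℂ γ₀ γ₀ : ℂ).re = ‖γ₀‖ ^ 2 := by
        rw [inner_self_eq_norm_sq_to_K]; norm_cast
      have hzn : (inner ℂ (z γ₀) (z γ₀) : ℂ).re = ‖z γ₀‖ ^ 2 := by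
        rw [inner_self_eq_norm_sq_to_K]; norm_cast
      have him : (inner ℂ (z γ₀) (z γ₀) : ℂ).im = 0 := by
        exact inner_self_im (𝕜 := ℂ) (z γ₀)
      simp [Complex.add_re, Complex.mul_re, Complex.conj_ofReal, hre1, hγn, hzn, him]
      rw [← Complex.ofReal_pow, Complex.ofReal_re]
      simp only [← Complex.ofReal_pow, Complex.ofReal_re, Complex.ofReal_im]
      ring
    rw [hexp] at h
    exact h
  have hz0 : z γ₀ = 0 := by
    by_contra h
    have hn : 0 < ‖z γ₀‖ := norm_pos_iff.mpr h
    have := hkey ((‖γ₀‖ + 1) / ‖z γ₀‖)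
    rw [div_pow] at this
    have h2 : (‖γ₀‖ + 1) ^ 2 / ‖z γ₀‖ ^ 2 * ‖z γ₀‖ ^ 2 = (‖γ₀‖ + 1) ^ 2 := by
      field_simp
    rw [h2] at this
    nlinarith [norm_nonneg γ₀]
  -- z vanishes on K
  have hzK : ∀ v ∈ K, z v = 0 := by
    intro v hv
    rw [hK] at hv
    have hle : (Submodule.span ℂ
        {w : H | ∃ x' : H →L[ℂ] H, x' ∈ M.commutant ∧ w = x' γ₀}).topologicalClosure
        ≤ LinearMap.ker (z : H →ₗ[ℂ] H) := by
      apply Submodule.topologicalClosure_minimal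
      · rw [Submodule.span_le]
        rintro w ⟨x', hx', rfl⟩
        have hcomm : z * x' = x' * z := VonNeumannAlgebra.mem_commutant_iff.mp hx' z hzM
        have : z (x' γ₀) = x' (z γ₀) := by
          calc z (x' γ₀) = (z * x') γ₀ := rfl
          _ = (x' * z) γ₀ := by rw [hcomm]
          _ = x' (z γ₀) := rfl
        simp [LinearMap.mem_ker, this, hz0]
      · exact ContinuousLinearMap.isClosed_ker z
    exact hle hv
  ext ξ
  have h1 : x ξ = x (p₀ ξ) := by rw [← ContinuousLinearMap.comp_apply, hxp]
  have h2 : y ξ = y (p₀ ξ) := by rw [← ContinuousLinearMap.comp_apply, hyp]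
  have h3 : z (p₀ ξ) = 0 := hzK _ (hp₀ ξ).1
  have h4 : x (p₀ ξ) - y (p₀ ξ) = 0 := by
    rw [← ContinuousLinearMap.sub_apply, ← hzdef]; exact h3
  rw [h1, h2]
  exact sub_eq_zero.mp h4
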